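/- Let G be a connected simple undirected graph on vertex set {1,…,N} with N ≥ 3, let L be its Laplacian matrix, and let λ₂ = inf{ (vᵀLv)/(vᵀv) : v ∈ ℝ^N, v ≠ 0, 1ᵀv = 0 }. Let β > 0, let φ be a real N×N matrix with φ_{ij} = 0 whenever {i,j} is not an edge of G or i = j, and define the mask m = (φᵀ − φ)·1. Let x : [0,∞) → ℝ^N be differentiable with γ := sup_{τ ≥ 0} ‖(I − (1/N)·1·1ᵀ)·x'(τ)‖₂ < ∞, and let x̂ : [0,∞) → ℝ^N be differentiable with x̂'(t) = x'(t) − β·L·x̂(t) for all t ≥ 0 and masked initialization x̂(0) = x(0) + m. Then for every agent i, limsup_{t→∞} |x̂_i(t) − (1/N)·Σ_{j=1}^N x_j(t)| ≤ γ/(β·λ₂); that is, the privacy-preserving masked DAC algorithm converges to the same bounded neighborhood of the true average as the conventional DAC algorithm. -/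

import Mathlib

open Matrix Filter

open Matrix Filter Real Set

lemma mdac_const {f : ℝ → ℝ} (hd : ∀ t, 0 ≤ t → HasDerivAt f 0 t) :
    ∀ t, 0 ≤ t → f t = f 0 := by
  intro t ht
  exact constant_of_has_deriv_right_zero
    (fun s hs => ((hd s hs.1).continuousAt).continuousWithinAt)
    (fun s hs => ((hd s hs.1).hasDerivWithinAt)) t (right_mem_Icc.2 ht)

lemma mdac_cs {N : ℕ} (a b : Fin N → ℝ) :
    a ⬝ᵥ b ≤ Real.sqrt (∑ i, a i ^ 2) * Real.sqrt (∑ i, b i ^ 2) := by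
  have hnn : (0:ℝ) ≤ Real.sqrt (∑ i, a i ^ 2) * Real.sqrt (∑ i, b i ^ 2) :=
    mul_nonneg (Real.sqrt_nonneg _) (Real.sqrt_nonneg _)
  have habs : a ⬝ᵥ b ≤ |∑ i, a i * b i| := le_abs_self _
  refine habs.trans ?_
  rw [← Real.sqrt_sq_eq_abs, ← Real.sqrt_mul (by positivity)]
  exact Real.sqrt_le_sqrt (Finset.sum_mul_sq_le_sq_mul_sq _ _ _)

lemma mdac_gronwall {f f' : ℝ → ℝ} {K ε : ℝ} (hK : K < 0) (hε : 0 ≤ ε)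
    (hd : ∀ t, 0 ≤ t → HasDerivAt f (f' t) t)
    (hb : ∀ t, 0 ≤ t → f' t ≤ K * f t + ε) :
    ∀ t, 0 ≤ t → f t ≤ f 0 * Real.exp (K * t) + ε / (-K) := by
  intro t ht
  have h := le_gronwallBound_of_liminf_deriv_right_le (f := f) (f' := f')
    (δ := f 0) (K := K) (ε := ε) (a := 0) (b := t)
    (fun s hs => ((hd s hs.1).continuousAt).continuousWithinAt)
    (fun s hs r hr => ((hd s hs.1).hasDerivWithinAt).liminf_right_slope_le hr)
    le_rfl (fun s hs => hb s hs.1) t (right_mem_Icc.2 ht)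
  rw [gronwallBound_of_K_ne_0 (ne_of_lt hK), sub_zero] at h
  refine h.trans ?_
  have hE1 : Real.exp (K * t) ≤ 1 := Real.exp_le_one_iff.2 (by nlinarith)
  have hE0 : 0 < Real.exp (K * t) := Real.exp_pos _
  have heq : ε / K * (Real.exp (K * t) - 1) = ε * (1 - Real.exp (K * t)) / (-K) := by
    field_simp
    ring
  simp only []
  rw [heq]
  have : ε * (1 - Real.exp (K * t)) / (-K) ≤ ε / (-K) := by
    apply div_le_div_of_nonneg_right ?_ (by linarith) |>.trans_eq rfl
    nlinarith
  linarith

lemma mdac_gap (N : ℕ) (hN : 3 ≤ N) (G : SimpleGraph (Fin N)) [DecidableRel G.Adj]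
    (hconn : G.Connected) :
    ∃ c : ℝ, 0 < c ∧ ∀ v : Fin N → ℝ, v ≠ 0 → (∑ i, v i) = 0 →
      c ≤ (v ⬝ᵥ (G.lapMatrix ℝ *ᵥ v)) / (v ⬝ᵥ v) := by
  classical
  set M := G.lapMatrix ℝ with hM
  set f : EuclideanSpace ℝ (Fin N) → ℝ := fun v => v ⬝ᵥ (M *ᵥ v) with hf
  have happ : ∀ i : Fin N, Continuous (fun v : EuclideanSpace ℝ (Fin N) => v i) :=
    fun i => (EuclideanSpace.proj (𝕜 := ℝ) (ι := Fin N) i).continuous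
  have hcont : Continuous f := by
    have : f = fun v : EuclideanSpace ℝ (Fin N) => ∑ i, v i * ∑ j, M i j * v j := rfl
    rw [this]
    exact continuous_finset_sum _ fun i _ =>
      (happ i).mul (continuous_finset_sum _ fun j _ => continuous_const.mul (happ j))
  have hsumcont : Continuous (fun v : EuclideanSpace ℝ (Fin N) => ∑ i, v i) :=
    continuous_finset_sum _ fun i _ => happ i
  set K : Set (EuclideanSpace ℝ (Fin N)) :=
    {v | (∑ i, v i) = 0} ∩ Metric.sphere 0 1 with hK
  have hKc : IsCompact K :=
    (isCompact_sphere (0 : EuclideanSpace ℝ (Fin N)) 1).inter_left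
      (isClosed_eq hsumcont continuous_const)
  -- normalization
  have hnorm : ∀ v : Fin N → ℝ, v ≠ 0 → (∑ i, v i) = 0 →
      ∃ w ∈ K, f w = (v ⬝ᵥ (M *ᵥ v)) / (v ⬝ᵥ v) := by
    intro v hv hs
    obtain ⟨k, hk⟩ := Function.ne_iff.1 hv
    have hp : 0 < v ⬝ᵥ v :=
      Finset.sum_pos' (fun i _ => mul_self_nonneg _)
        ⟨k, Finset.mem_univ k, mul_self_pos.2 hk⟩
    set n : ℝ := Real.sqrt (v ⬝ᵥ v) with hn
    have hnpos : 0 < n := Real.sqrt_pos.2 hp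
    have hnsq : n * n = v ⬝ᵥ v := Real.mul_self_sqrt hp.le
    refine ⟨WithLp.toLp 2 (fun i => n⁻¹ * v i), ⟨?_, ?_⟩, ?_⟩
    · show (∑ i, n⁻¹ * v i) = 0
      rw [← Finset.mul_sum, hs, mul_zero]
    · rw [mem_sphere_zero_iff_norm, EuclideanSpace.norm_eq]
      show √(∑ i, ‖n⁻¹ * v i‖ ^ 2) = 1
      have : ∀ i, ‖n⁻¹ * v i‖ ^ 2 = n⁻¹ * n⁻¹ * (v i * v i) := by
        intro i; rw [Real.norm_eq_abs, sq_abs]; ring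
      rw [Finset.sum_congr rfl fun i _ => this i, ← Finset.mul_sum]
      rw [show (∑ i, v i * v i) = v ⬝ᵥ v from rfl, ← hnsq]
      rw [show n⁻¹ * n⁻¹ * (n * n) = 1 by field_simp]
      exact Real.sqrt_one
    · show (fun i => n⁻¹ * v i) ⬝ᵥ (M *ᵥ fun i => n⁻¹ * v i) = _
      have hw : (fun i => n⁻¹ * v i) = n⁻¹ • v := rfl
      rw [hw, Matrix.mulVec_smul, dotProduct_smul, smul_dotProduct,
        smul_eq_mul, smul_eq_mul, ← hnsq]
      field_simp
  -- K nonempty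
  have h01 : (⟨0, by omega⟩ : Fin N) ≠ ⟨1, by omega⟩ := by
    simp [Fin.ext_iff]
  set v1 : Fin N → ℝ := Pi.single (⟨0, by omega⟩ : Fin N) 1 - Pi.single ⟨1, by omega⟩ 1 with hv1
  have hv1sum : (∑ i, v1 i) = 0 := by
    simp [hv1, Finset.sum_sub_distrib, Finset.sum_pi_single']
  have hv1ne : v1 ≠ 0 := by
    intro h
    have := congrFun h ⟨0, by omega⟩
    simp [hv1, Pi.single_eq_of_ne h01.symm] at this
  obtain ⟨w1, hw1K, _⟩ := hnorm v1 hv1ne hv1sum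
  obtain ⟨v₀, hv₀K, hmin'⟩ := hKc.exists_isMinOn ⟨w1, hw1K⟩ hcont.continuousOn
  have hmin : ∀ w ∈ K, f v₀ ≤ f w := fun w hw => hmin' hw
  have hnorm₀ : ‖v₀‖ = 1 := mem_sphere_zero_iff_norm.mp hv₀K.2
  have h0 : 0 ≤ f v₀ := by
    have := (SimpleGraph.posSemidef_lapMatrix (R := ℝ) (G := G)).dotProduct_mulVec_nonneg (WithLp.ofLp v₀)
    simpa [hf] using this
  have hne : f v₀ ≠ 0 := by
    intro h
    have hq : Matrix.toLinearMap₂' ℝ (G.lapMatrix ℝ) v₀ v₀ = 0 := by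
      rw [Matrix.toLinearMap₂'_apply']; exact h
    have hcst := (G.lapMatrix_toLinearMap₂'_apply'_eq_zero_iff_forall_reachable v₀).1 hq
    have hconst : ∀ i : Fin N, v₀ i = v₀ ⟨0, by omega⟩ :=
      fun i => hcst i _ (hconn.preconnected i _)
    have hsum0 : (∑ i, v₀ i) = 0 := hv₀K.1
    rw [Finset.sum_congr rfl fun i _ => hconst i, Finset.sum_const, Finset.card_univ,
      Fintype.card_fin, nsmul_eq_mul] at hsum0
    have hN0 : (0:ℝ) < (N:ℝ) := by
      have : 0 < N := by omega
      exact_mod_cast this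
    have hz : v₀ ⟨0, by omega⟩ = 0 := by
      rcases mul_eq_zero.mp hsum0 with h | h
      · exact absurd h (ne_of_gt hN0)
      · exact h
    have hv0 : v₀ = 0 := by
      ext i
      rw [hconst i, hz]
      rfl
    rw [hv0, norm_zero] at hnorm₀
    exact one_ne_zero hnorm₀.symm
  refine ⟨f v₀, lt_of_le_of_ne h0 (Ne.symm hne), ?_⟩
  intro v hv hs
  obtain ⟨w, hwK, hfw⟩ := hnorm v hv hs
  rw [← hfw]
  exact hmin w hwK


/-- Theorem 1: the privacy-preserving masked DAC algorithm, with mask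
`m = (φᵀ − φ)·1` built from offsets `φ` supported on the edges of `G` and masked
initialization `xhat(0) = x(0) + m`, converges to the same bounded `γ/(β·λ₂)`
neighborhood of the true average as the conventional DAC algorithm. -/
theorem masked_dac_same_ultimate_bound
    (N : ℕ) (hN : 3 ≤ N) (G : SimpleGraph (Fin N)) [DecidableRel G.Adj]
    (hconn : G.Connected)
    (L : Matrix (Fin N) (Fin N) ℝ) (hL : L = G.lapMatrix ℝ)
    (lam2 : ℝ)
    (hlam2 : lam2 = sInf {r : ℝ | ∃ v : Fin N → ℝ, v ≠ 0 ∧ (∑ i, v i) = 0 ∧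
        r = (v ⬝ᵥ (L *ᵥ v)) / (v ⬝ᵥ v)})
    (β : ℝ) (hβ : 0 < β)
    (φ : Matrix (Fin N) (Fin N) ℝ)
    (hφ : ∀ i j, (¬ G.Adj i j ∨ i = j) → φ i j = 0)
    (m : Fin N → ℝ) (hm : m = (φ.transpose - φ) *ᵥ (fun _ => (1 : ℝ)))
    (x : ℝ → Fin N → ℝ) (hx : Differentiable ℝ x)
    (γ : ℝ)
    (hγ : IsLUB {r : ℝ | ∃ τ ≥ (0 : ℝ), r = Real.sqrt (∑ i,
        ((((1 : Matrix (Fin N) (Fin N) ℝ)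
            - (N : ℝ)⁻¹ • Matrix.of (fun _ _ => (1 : ℝ))) *ᵥ deriv x τ) i) ^ 2)} γ)
    (xhat : ℝ → Fin N → ℝ)
    (hinit : xhat 0 = x 0 + m)
    (hode : ∀ t ≥ (0 : ℝ), HasDerivAt xhat (deriv x t - β • (L *ᵥ xhat t)) t) :
    ∀ i : Fin N,
      limsup (fun t : ℝ => |xhat t i - (∑ j, x t j) / N|) atTop ≤ γ / (β * lam2) := by
  classical
  subst hL
  set L := G.lapMatrix ℝ with hLdef
  set P : Matrix (Fin N) (Fin N) ℝ :=
    (1 : Matrix (Fin N) (Fin N) ℝ) - (N : ℝ)⁻¹ • Matrix.of (fun _ _ => (1 : ℝ)) with hPdef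
  have hN0 : (0:ℝ) < (N:ℝ) := by
    have : 0 < N := by omega
    exact_mod_cast this
  -- spectral gap facts
  obtain ⟨c, hc, hgap⟩ := mdac_gap N hN G hconn
  have hSne : {r : ℝ | ∃ v : Fin N → ℝ, v ≠ 0 ∧ (∑ i, v i) = 0 ∧
      r = (v ⬝ᵥ (L *ᵥ v)) / (v ⬝ᵥ v)}.Nonempty := by
    set v1 : Fin N → ℝ := Pi.single (⟨0, by omega⟩ : Fin N) 1 - Pi.single ⟨1, by omega⟩ 1 with hv1
    have h01 : (⟨0, by omega⟩ : Fin N) ≠ ⟨1, by omega⟩ := by simp [Fin.ext_iff]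
    have hv1sum : (∑ i, v1 i) = 0 := by
      simp [hv1, Finset.sum_sub_distrib, Finset.sum_pi_single']
    have hv1ne : v1 ≠ 0 := by
      intro h
      have := congrFun h ⟨0, by omega⟩
      simp [hv1, Pi.single_eq_of_ne h01.symm] at this
    exact ⟨_, v1, hv1ne, hv1sum, rfl⟩
  have hSlb : ∀ r ∈ {r : ℝ | ∃ v : Fin N → ℝ, v ≠ 0 ∧ (∑ i, v i) = 0 ∧
      r = (v ⬝ᵥ (L *ᵥ v)) / (v ⬝ᵥ v)}, c ≤ r := by
    rintro r ⟨v, hv0, hvs, rfl⟩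
    exact hgap v hv0 hvs
  have hlam2_ge : c ≤ lam2 := hlam2 ▸ le_csInf hSne hSlb
  have hlam2pos : 0 < lam2 := lt_of_lt_of_le hc hlam2_ge
  have hkey : ∀ v : Fin N → ℝ, (∑ i, v i) = 0 → lam2 * (v ⬝ᵥ v) ≤ v ⬝ᵥ (L *ᵥ v) := by
    intro v hs
    by_cases hv : v = 0
    · simp [hv]
    · obtain ⟨k, hk⟩ := Function.ne_iff.1 hv
      have hp : 0 < v ⬝ᵥ v :=
        Finset.sum_pos' (fun i _ => mul_self_nonneg _)
          ⟨k, Finset.mem_univ k, mul_self_pos.2 hk⟩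
      have hle : lam2 ≤ (v ⬝ᵥ (L *ᵥ v)) / (v ⬝ᵥ v) := by
        rw [hlam2]
        exact csInf_le ⟨c, hSlb⟩ ⟨v, hv, hs, rfl⟩
      rw [le_div_iff₀ hp] at hle
      linarith
  -- gamma facts
  have hγub : ∀ τ, 0 ≤ τ → Real.sqrt (∑ i, ((P *ᵥ deriv x τ) i) ^ 2) ≤ γ :=
    fun τ hτ => hγ.1 ⟨τ, hτ, rfl⟩
  have hγ0 : 0 ≤ γ := le_trans (Real.sqrt_nonneg _) (hγub 0 le_rfl)
  -- row and column sums of L vanish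
  have rowsum : ∀ i, ∑ j, L i j = 0 := by
    intro i
    have := congrFun (G.lapMatrix_mulVec_const_eq_zero (R := ℝ)) i
    simpa [Matrix.mulVec, dotProduct] using this
  have colsum : ∀ j, ∑ i, L i j = 0 := by
    intro j
    have hsym : ∀ i, L i j = L j i := by
      intro i
      have := congrFun (congrFun (G.isSymm_lapMatrix (R := ℝ)) i) j
      simpa [Matrix.transpose_apply] using this.symm
    rw [Finset.sum_congr rfl fun i _ => hsym i]
    exact rowsum j
  have LTsum : ∀ w : Fin N → ℝ, ∑ i, (L *ᵥ w) i = 0 := by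
    intro w
    simp only [Matrix.mulVec, dotProduct]
    rw [Finset.sum_comm]
    have : ∀ j, ∑ i, L i j * w j = 0 := by
      intro j
      rw [← Finset.sum_mul, colsum, zero_mul]
    simp [this]
  -- coordinatewise derivatives
  have hxd : ∀ (t : ℝ) (i : Fin N), HasDerivAt (fun s => x s i) (deriv x t i) t := by
    intro t i
    exact (ContinuousLinearMap.proj (R := ℝ) (φ := fun _ : Fin N => ℝ) i).hasFDerivAt.comp_hasDerivAt
      t (hx t).hasDerivAt
  have hxhatd : ∀ (t : ℝ), 0 ≤ t → ∀ (i : Fin N),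
      HasDerivAt (fun s => xhat s i) (deriv x t i - β * (L *ᵥ xhat t) i) t := by
    intro t ht i
    have := (ContinuousLinearMap.proj (R := ℝ) (φ := fun _ : Fin N => ℝ) i).hasFDerivAt.comp_hasDerivAt
      t (hode t ht)
    exact this
  have havg : ∀ t : ℝ, HasDerivAt (fun s => (∑ j, x s j) / (N:ℝ)) ((∑ j, deriv x t j) / (N:ℝ)) t :=
    fun t => (HasDerivAt.fun_sum fun j _ => hxd t j).div_const _
  -- the error function
  set e : ℝ → Fin N → ℝ := fun t i => xhat t i - (∑ j, x t j) / (N:ℝ) with he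
  set d : ℝ → Fin N → ℝ := fun t i => (P *ᵥ deriv x t) i - β * ((L *ᵥ e t) i) with hd
  have hPapp : ∀ (v : Fin N → ℝ) (i : Fin N), (P *ᵥ v) i = v i - (∑ j, v j) / (N:ℝ) := by
    intro v i
    rw [hPdef, Matrix.sub_mulVec, Pi.sub_apply, Matrix.one_mulVec, Matrix.smul_mulVec,
      Pi.smul_apply, smul_eq_mul]
    have hv : (Matrix.of (fun _ _ => (1:ℝ)) *ᵥ v) i = ∑ j, v j := by
      simp [Matrix.mulVec, dotProduct]
    rw [hv]
    ring
  have hLe : ∀ (t : ℝ) (i : Fin N), (L *ᵥ e t) i = (L *ᵥ xhat t) i := by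
    intro t i
    simp only [Matrix.mulVec, dotProduct, he]
    rw [show (∑ j, L i j * (xhat t j - (∑ k, x t k) / (N:ℝ)))
        = (∑ j, L i j * xhat t j) - (∑ j, L i j) * ((∑ k, x t k) / (N:ℝ)) by
      rw [Finset.sum_mul]
      rw [← Finset.sum_sub_distrib]
      apply Finset.sum_congr rfl
      intro j _
      ring]
    rw [rowsum i, zero_mul, sub_zero]
  have hed : ∀ (t : ℝ), 0 ≤ t → ∀ (i : Fin N), HasDerivAt (fun s => e s i) (d t i) t := by
    intro t ht i
    have h1 := (hxhatd t ht i).sub (havg t)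
    have : d t i = (deriv x t i - β * (L *ᵥ xhat t) i) - (∑ j, deriv x t j) / (N:ℝ) := by
      rw [hd]
      simp only []
      rw [hPapp, hLe]
      ring
    rw [this]
    exact h1
  -- zero-sum property of the error
  have sum_e : ∀ t : ℝ, 0 ≤ t → (∑ i, e t i) = 0 := by
    set s : ℝ → ℝ := fun t => (∑ i, xhat t i) - ∑ j, x t j with hsdef
    have hs' : ∀ t, 0 ≤ t → HasDerivAt s 0 t := by
      intro t ht
      have h1 : HasDerivAt (fun u => ∑ i, xhat u i)
          (∑ i, (deriv x t i - β * (L *ᵥ xhat t) i)) t :=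
        HasDerivAt.fun_sum fun i _ => hxhatd t ht i
      have h2 : HasDerivAt (fun u => ∑ j, x u j) (∑ j, deriv x t j) t :=
        HasDerivAt.fun_sum fun j _ => hxd t j
      have h3 := h1.sub h2
      have : (∑ i, (deriv x t i - β * (L *ᵥ xhat t) i)) - (∑ j, deriv x t j) = 0 := by
        rw [Finset.sum_sub_distrib]
        have : ∑ i, β * (L *ᵥ xhat t) i = β * ∑ i, (L *ᵥ xhat t) i := by
          rw [Finset.mul_sum]
        rw [this, LTsum, mul_zero]
        ring
      rw [this] at h3
      exact h3
    have hs0 : s 0 = 0 := by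
      rw [hsdef]
      simp only [hinit, Pi.add_apply]
      rw [Finset.sum_add_distrib]
      have hmsum : (∑ i, m i) = 0 := by
        rw [hm]
        simp only [Matrix.mulVec, dotProduct, Matrix.sub_apply, Matrix.transpose_apply,
          mul_one]
        have hdist : ∀ i : Fin N, (∑ j, (φ j i - φ i j)) = (∑ j, φ j i) - ∑ j, φ i j :=
          fun i => Finset.sum_sub_distrib _ _
        rw [Finset.sum_congr rfl fun i _ => hdist i, Finset.sum_sub_distrib, Finset.sum_comm]
        exact sub_self _
      rw [hmsum]
      ring
    intro t ht
    have hst : s t = 0 := by rw [mdac_const hs' t ht, hs0]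
    have : (∑ i, e t i) = s t := by
      rw [he, hsdef]
      simp only []
      rw [Finset.sum_sub_distrib, Finset.sum_const, Finset.card_univ, Fintype.card_fin,
        nsmul_eq_mul, mul_div_cancel₀ _ (ne_of_gt hN0)]
    rw [this, hst]
  -- Lyapunov function
  set V : ℝ → ℝ := fun t => ∑ i, (e t i) ^ 2 with hV
  set Vd : ℝ → ℝ := fun t => ∑ i, 2 * e t i * d t i with hVd
  have hV0 : ∀ t, 0 ≤ V t := fun t => Finset.sum_nonneg fun i _ => sq_nonneg _
  have hV' : ∀ t, 0 ≤ t → HasDerivAt V (Vd t) t := by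
    intro t ht
    have := HasDerivAt.fun_sum (fun i (_ : i ∈ Finset.univ) => (hed t ht i).pow 2)
    simpa [hV, hVd, pow_one, mul_comm, mul_assoc, mul_left_comm] using this
  have hVd_le : ∀ t, 0 ≤ t → Vd t ≤ 2 * γ * Real.sqrt (V t) - 2 * (β * lam2) * V t := by
    intro t ht
    have hexp : Vd t = 2 * (e t ⬝ᵥ (P *ᵥ deriv x t)) - 2 * β * (e t ⬝ᵥ (L *ᵥ e t)) := by
      rw [hVd]
      simp only [dotProduct, hd]
      rw [Finset.mul_sum, Finset.mul_sum, ← Finset.sum_sub_distrib]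
      apply Finset.sum_congr rfl
      intro i _
      ring
    have hcs : e t ⬝ᵥ (P *ᵥ deriv x t) ≤ Real.sqrt (V t) * γ := by
      refine (mdac_cs (e t) (P *ᵥ deriv x t)).trans ?_
      exact mul_le_mul_of_nonneg_left (hγub t ht) (Real.sqrt_nonneg _)
    have hquad : lam2 * V t ≤ e t ⬝ᵥ (L *ᵥ e t) := by
      have := hkey (e t) (sum_e t ht)
      have hVe : e t ⬝ᵥ e t = V t := by
        rw [hV]
        simp only [dotProduct]
        exact Finset.sum_congr rfl fun i _ => (sq (e t i)) ▸ (pow_two (e t i)).symm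
      rw [hVe] at this
      exact this
    rw [hexp]
    nlinarith [Real.sqrt_nonneg (V t)]
  -- conclusion via Grönwall for each ε > 0
  intro i
  have habs_le : ∀ t, |xhat t i - (∑ j, x t j) / (N:ℝ)| ≤ Real.sqrt (V t) := by
    intro t
    rw [← Real.sqrt_sq_eq_abs]
    apply Real.sqrt_le_sqrt
    exact Finset.single_le_sum (f := fun j => (e t j) ^ 2) (fun j _ => sq_nonneg _)
      (Finset.mem_univ i)
  have main : ∀ ε : ℝ, 0 < ε → ∀ᶠ t in atTop,
      |xhat t i - (∑ j, x t j) / (N:ℝ)| ≤ γ / (β * lam2) + 2 * ε := by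
    intro ε hε
    set u : ℝ → ℝ := fun t => Real.sqrt (V t + ε ^ 2) with hu
    have hupos : ∀ t, 0 < V t + ε ^ 2 := fun t => by nlinarith [hV0 t]
    have hu_pos : ∀ t, 0 < u t := fun t => Real.sqrt_pos.2 (hupos t)
    have hu_sq : ∀ t, u t ^ 2 = V t + ε ^ 2 := fun t => Real.sq_sqrt (hupos t).le
    have hu_ge : ∀ t, ε ≤ u t := by
      intro t
      rw [hu]
      have : ε = Real.sqrt (ε ^ 2) := by rw [Real.sqrt_sq hε.le]
      rw [this]
      exact Real.sqrt_le_sqrt (by nlinarith [hV0 t, Real.sq_sqrt hε.le])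
    have hsqV_le : ∀ t, Real.sqrt (V t) ≤ u t := by
      intro t
      exact Real.sqrt_le_sqrt (by nlinarith)
    set uder : ℝ → ℝ := fun t => Vd t / (2 * u t) with huder
    have hu' : ∀ t, 0 ≤ t → HasDerivAt u (uder t) t := by
      intro t ht
      exact ((hV' t ht).add_const (ε ^ 2)).sqrt (ne_of_gt (hupos t))
    have hKneg : -(β * lam2) < 0 := by nlinarith
    have hbnd : ∀ t, 0 ≤ t → uder t ≤ (-(β * lam2)) * u t + (γ + β * lam2 * ε) := by
      intro t ht
      rw [huder]
      simp only []
      rw [div_le_iff₀ (by positivity)]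
      have h1 := hVd_le t ht
      have h2 := hu_sq t
      have h3 := hsqV_le t
      have h4 := hu_ge t
      have h5 := hu_pos t
      nlinarith [Real.sqrt_nonneg (V t), mul_nonneg hγ0 (sub_nonneg.2 h3),
        mul_nonneg (mul_nonneg hβ.le hlam2pos.le) (mul_nonneg hε.le (sub_nonneg.2 h4))]
    have hgron := mdac_gronwall hKneg (by positivity) hu' hbnd
    have hdecay : Tendsto (fun t : ℝ => u 0 * Real.exp (-(β * lam2) * t)) atTop (nhds 0) := by
      have h1 : Tendsto (fun t : ℝ => Real.exp (-(β * lam2) * t)) atTop (nhds 0) :=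
        Real.tendsto_exp_atBot.comp (Tendsto.const_mul_atTop_of_neg hKneg tendsto_id)
      simpa using h1.const_mul (u 0)
    have hev1 : ∀ᶠ t in atTop, u 0 * Real.exp (-(β * lam2) * t) < ε := by
      have := hdecay.eventually (eventually_lt_nhds hε)
      exact this
    filter_upwards [hev1, eventually_ge_atTop (0:ℝ)] with t hev ht
    have h6 := hgron t ht
    have h7 : (γ + β * lam2 * ε) / (-(-(β * lam2))) = γ / (β * lam2) + ε := by
      rw [neg_neg]
      field_simp
    rw [h7] at h6
    calc |xhat t i - (∑ j, x t j) / (N:ℝ)| ≤ Real.sqrt (V t) := habs_le t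
      _ ≤ u t := hsqV_le t
      _ ≤ u 0 * Real.exp (-(β * lam2) * t) + (γ / (β * lam2) + ε) := h6
      _ ≤ γ / (β * lam2) + 2 * ε := by linarith
  have hcob : IsCoboundedUnder (· ≤ ·) atTop (fun t : ℝ => |xhat t i - (∑ j, x t j) / (N:ℝ)|) :=
    isCoboundedUnder_le_of_le atTop (x := 0) fun t => abs_nonneg _
  refine le_of_forall_pos_le_add ?_
  intro ε hε
  refine limsup_le_of_le hcob ?_
  filter_upwards [main (ε / 2) (by linarith)] with t h
  calc |xhat t i - (∑ j, x t j) / (N:ℝ)| ≤ γ / (β * lam2) + 2 * (ε / 2) := h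
    _ = γ / (β * lam2) + ε := by ring
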